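/- For every integer j ≥ 0 and every integer k ≥ 1, ∫_0^1 (log(1+t))^j (log t)^k / (1+t) dt = (−1)^{k+j} · k! · j! · ∑_{n=1}^∞ (−1)^{n+1} s(n, j+1) / (n! · n^k). -/

import Mathlib

open Real

/-- Generalized harmonic number `H_n^{(p)} = ∑_{j=1}^n 1/j^p`. -/
noncomputable def Hp (p n : ℕ) : ℝ := ∑ j ∈ Finset.Icc 1 n, (1:ℝ) / (j:ℝ)^p

/-- Polylogarithm `Li_p(y) = ∑_{n=1}^∞ y^n / n^p`. -/
noncomputable def Li (p : ℕ) (y : ℝ) : ℝ := ∑' n : ℕ, y^(n+1) / ((n:ℝ)+1)^p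

/-- Riemann zeta value `ζ(s) = ∑_{n=1}^∞ 1/n^s`. -/
noncomputable def rzeta (s : ℕ) : ℝ := ∑' n : ℕ, (1:ℝ) / ((n:ℝ)+1)^s

/-- Unsigned Stirling numbers of the first kind. -/
def stirling : ℕ → ℕ → ℕ
  | 0, 0 => 1
  | 0, _+1 => 0
  | _+1, 0 => 0
  | n+1, k+1 => stirling n k + n * stirling n (k+1)

/-- Complete exponential Bell polynomial `Y_k` evaluated at `x_r = (r-1)! H_n^{(r)}`. -/
noncomputable def Y : ℕ → ℕ → ℝ
  | _, 0 => 1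
  | n, (k+1) => ∑ j ∈ Finset.range (k+1),
      (Nat.choose k j : ℝ) * ((Nat.factorial j : ℝ) * Hp (j+1) n) * Y n (k-j)

/-- Alternating harmonic number `L_n(1) = ∑_{j=1}^n (-1)^{j-1}/j`. -/
noncomputable def L (n : ℕ) : ℝ := ∑ j ∈ Finset.Icc 1 n, (-1:ℝ)^(j+1) / (j:ℝ)

lemma stirling_rec (n k : ℕ) : stirling (n+1) (k+1) = stirling n k + n * stirling n (k+1) := rfl

lemma stirling_succ_zero (n : ℕ) : stirling (n+1) 0 = 0 := rfl

lemma stirling_le (n j : ℕ) : stirling n j ≤ n.factorial := by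
  induction n generalizing j with
  | zero => cases j <;> simp [stirling]
  | succ n ih =>
    cases j with
    | zero => simp [stirling]
    | succ j =>
      rw [stirling_rec, Nat.factorial_succ]
      calc stirling n j + n * stirling n (j+1) ≤ n.factorial + n * n.factorial := by
            gcongr <;> [exact ih j; exact ih (j+1)]
        _ = (n+1) * n.factorial := by ring

open Finset in
lemma conv_aux (j c : ℕ) (g : ℕ → ℕ)
    (hg : ∀ n, ∑ m ∈ range n, n.choose m * (n-1-m).factorial * g m
      = c * stirling (n+1) (j+1))
    (hrec : ∀ i, stirling (i+2) (j+1) = g i + (i+1) * stirling (i+1) (j+1)) :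
    ∀ n, ∑ m ∈ range n, n.choose m * (n-1-m).factorial * stirling (m+1) (j+1)
      = (c+1) * stirling (n+1) (j+2) := by
  intro n
  induction n with
  | zero => simp [stirling]
  | succ n IH =>
    set S : ℕ → ℕ := fun m => stirling (m+1) (j+1) with hS
    have e1 : ∑ m ∈ range (n+1), (n+1).choose m * (n+1-1-m).factorial * S m
        = (∑ i ∈ range n, n.choose i * (n-1-i).factorial * S (i+1))
          + ((∑ i ∈ range n, n.choose (i+1) * (n-1-i).factorial * S (i+1))
          + n.factorial * S 0) := by
      rw [Finset.sum_range_succ' (fun m => (n+1).choose m * (n+1-1-m).factorial * S m) n]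
      rw [Finset.sum_congr rfl (g := fun k => n.choose k * (n-1-k).factorial * S (k+1)
            + n.choose (k+1) * (n-1-k).factorial * S (k+1)) (fun k hk => by
        have h2 : (n+1) - 1 - (k+1) = n - 1 - k := by omega
        rw [h2, Nat.choose_succ_succ' n k]; ring)]
      rw [Finset.sum_add_distrib]
      simp [Nat.succ_sub_one]
      ring
    have e2 : (∑ i ∈ range n, n.choose (i+1) * (n-1-i).factorial * S (i+1))
          + n.factorial * S 0
        = ∑ m ∈ range (n+1), n.choose m * (n-m).factorial * S m := by
      rw [Finset.sum_range_succ' (fun m => n.choose m * (n-m).factorial * S m) n]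
      congr 1
      · exact Finset.sum_congr rfl (fun i hi => by
          have : n - (i+1) = n - 1 - i := by omega
          rw [this])
      · simp
    have e3 : ∑ m ∈ range (n+1), n.choose m * (n-m).factorial * S m
        = S n + ∑ m ∈ range n, (n-m) * (n.choose m * (n-1-m).factorial * S m) := by
      rw [Finset.sum_range_succ]
      rw [Finset.sum_congr rfl (g := fun m => (n-m) * (n.choose m * (n-1-m).factorial * S m))
        (fun m hm => by
          have hmn : m < n := Finset.mem_range.mp hm
          obtain ⟨d, hd⟩ : ∃ d, n - 1 - m = d := ⟨_, rfl⟩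
          have h1 : n - m = d + 1 := by omega
          rw [hd, h1, Nat.factorial_succ]; ring)]
      simp [add_comm]
    have e4 : ∑ i ∈ range n, n.choose i * (n-1-i).factorial * S (i+1)
        = c * S n + ∑ i ∈ range n, (i+1) * (n.choose i * (n-1-i).factorial * S i) := by
      rw [Finset.sum_congr rfl (g := fun i => n.choose i * (n-1-i).factorial * g i
            + (i+1) * (n.choose i * (n-1-i).factorial * S i)) (fun i hi => by
        have : S (i+1) = g i + (i+1) * S i := hrec i
        rw [this]; ring)]
      rw [Finset.sum_add_distrib, hg n]
    have e5 : ∑ i ∈ range n, (i+1) * (n.choose i * (n-1-i).factorial * S i)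
          + ∑ m ∈ range n, (n-m) * (n.choose m * (n-1-m).factorial * S m)
        = (n+1) * ((c+1) * stirling (n+1) (j+2)) := by
      rw [← Finset.sum_add_distrib, ← IH, Finset.mul_sum]
      exact Finset.sum_congr rfl (fun i hi => by
        have hmn : i < n := Finset.mem_range.mp hi
        have : (i+1) + (n-i) = n+1 := by omega
        rw [← add_mul, this])
    rw [e1, e2, e3, e4]
    have hfin : stirling (n+2) (j+2) = S n + (n+1) * stirling (n+1) (j+2) := stirling_rec (n+1) (j+1)
    calc c * S n + ∑ i ∈ range n, (i+1) * (n.choose i * (n-1-i).factorial * S i)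
          + (S n + ∑ m ∈ range n, (n-m) * (n.choose m * (n-1-m).factorial * S m))
        = c * S n + S n + (∑ i ∈ range n, (i+1) * (n.choose i * (n-1-i).factorial * S i)
          + ∑ m ∈ range n, (n-m) * (n.choose m * (n-1-m).factorial * S m)) := by ring
      _ = c * S n + S n + (n+1) * ((c+1) * stirling (n+1) (j+2)) := by rw [e5]
      _ = (c+1) * (S n + (n+1) * stirling (n+1) (j+2)) := by ring
      _ = (c+1) * stirling (n+2) (j+2) := by rw [← hfin]

open Finset in
lemma stirling_conv (j : ℕ) : ∀ n, ∑ m ∈ range n, n.choose m * (n-1-m).factorial * stirling (m+1) (j+1)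
    = (j+1) * stirling (n+1) (j+2) := by
  induction j with
  | zero =>
    exact conv_aux 0 0 (fun m => 0) (fun n => by simp) (fun i => by
      rw [stirling_rec (i+1) 0, stirling_succ_zero])
  | succ j IH =>
    exact conv_aux (j+1) (j+1) (fun m => stirling (m+1) (j+1)) IH (fun i => stirling_rec (i+1) (j+1))


section
open MeasureTheory

lemma stirling_succ_one (n : ℕ) : stirling (n+1) 1 = n.factorial := by
  induction n with
  | zero => rfl
  | succ n ih =>
    show stirling (n+1) 0 + (n+1) * stirling (n+1) 1 = (n+1).factorial
    rw [ih]; simp [Nat.factorial_succ, stirling]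

lemma stirling_one_succ (j : ℕ) : stirling 1 (j+2) = 0 := by
  show stirling 0 (j+1) + 0 * stirling 0 (j+2) = 0
  simp [stirling]

lemma summable_norm_f {x : ℝ} (hx : |x| < 1) (j : ℕ) :
    Summable (fun m : ℕ => ‖(stirling (m+1) (j+1) : ℝ) * x^m / m.factorial‖) := by
  have h1 : Summable (fun m : ℕ => (m:ℝ) * |x|^m + |x|^m) := by
    have ha : ‖|x|‖ < 1 := by rwa [Real.norm_eq_abs, abs_abs]
    have := summable_pow_mul_geometric_of_norm_lt_one (R := ℝ) 1 ha
    simpa using this.add (summable_geometric_of_lt_one (abs_nonneg x) hx)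
  refine h1.of_nonneg_of_le (fun m => norm_nonneg _) (fun m => ?_)
  have hble : (stirling (m+1) (j+1) : ℝ) ≤ (m+1) * m.factorial := by
    have := stirling_le (m+1) (j+1)
    have h2 : (m+1).factorial = (m+1) * m.factorial := rfl
    exact_mod_cast h2 ▸ this
  have hfac : (0:ℝ) < m.factorial := by exact_mod_cast m.factorial_pos
  rw [norm_div, norm_mul, Real.norm_natCast, Real.norm_natCast, norm_pow, Real.norm_eq_abs]
  calc (stirling (m+1) (j+1) : ℝ) * |x|^m / (m.factorial:ℝ)
      ≤ ((m+1) * m.factorial) * |x|^m / m.factorial := by gcongr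
    _ = (m:ℝ) * |x|^m + |x|^m := by field_simp

open Finset in
lemma hasSum_P : ∀ (j : ℕ) {x : ℝ}, |x| < 1 →
    HasSum (fun m : ℕ => (stirling (m+1) (j+1) : ℝ) * x^m / m.factorial)
      ((-Real.log (1-x))^j / (j.factorial * (1-x))) := by
  intro j
  induction j with
  | zero =>
    intro x hx
    have hgeo := hasSum_geometric_of_abs_lt_one hx
    have : (fun m : ℕ => (stirling (m+1) 1 : ℝ) * x^m / m.factorial) = fun m => x^m := by
      funext m
      rw [stirling_succ_one]
      have hfac : (m.factorial : ℝ) ≠ 0 := by exact_mod_cast m.factorial_pos.ne'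
      field_simp
    rw [this]
    simpa using hgeo
  | succ j IH =>
    intro x hx
    have hx1 : (1:ℝ) - x ≠ 0 := by
      have : x < 1 := lt_of_le_of_lt (le_abs_self x) hx
      linarith
    set f : ℕ → ℝ := fun m => (stirling (m+1) (j+1) : ℝ) * x^m / m.factorial with hf
    set g : ℕ → ℝ := fun l => x^(l+1) / (l+1) with hgdef
    have hfn := summable_norm_f hx j
    have hgn : Summable (fun l => ‖g l‖) := by
      have h1 : Summable (fun l : ℕ => |x|^(l+1)) := by
        have := (summable_geometric_of_lt_one (abs_nonneg x) hx).mul_left |x|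
        simpa [pow_succ, mul_comm] using this
      refine h1.of_nonneg_of_le (fun l => norm_nonneg _) (fun l => ?_)
      rw [hgdef]
      dsimp only
      rw [norm_div, norm_pow, Real.norm_eq_abs, Real.norm_eq_abs]
      have h2 : (1:ℝ) ≤ |(l:ℝ)+1| := by
        rw [abs_of_pos (by positivity)]
        simp
      exact div_le_self (by positivity) h2
    have hA := IH hx
    have hB := Real.hasSum_pow_div_log_of_abs_lt_one hx
    -- the Cauchy product series
    have hc : Summable (fun n => ∑ kl ∈ antidiagonal n, f kl.1 * g kl.2) :=
      (summable_norm_sum_mul_antidiagonal_of_summable_norm hfn hgn).of_norm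
    have hprod : HasSum (fun n => ∑ kl ∈ antidiagonal n, f kl.1 * g kl.2)
        (((-Real.log (1-x))^j / (j.factorial * (1-x))) * (-Real.log (1-x))) := by
      rw [hc.hasSum_iff]
      rw [← tsum_mul_tsum_eq_tsum_sum_antidiagonal_of_summable_norm hfn hgn,
        hA.tsum_eq, hB.tsum_eq]
    -- identify the Cauchy product terms
    have hterm : ∀ n : ℕ, ∑ kl ∈ antidiagonal n, f kl.1 * g kl.2
        = ((j:ℝ)+1) * ((stirling (n+2) (j+2) : ℝ) * x^(n+1) / (n+1).factorial) := by
      intro n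
      rw [Finset.Nat.sum_antidiagonal_eq_sum_range_succ (fun k l => f k * g l) n]
      have hterm2 : ∀ k ∈ range (n+1), f k * g (n-k)
          = (((n+1).choose k * (n-k).factorial * stirling (k+1) (j+1) : ℕ) : ℝ)
            * x^(n+1) / (n+1).factorial := by
        intro k hk
        have hkn : k ≤ n := by simpa [Nat.lt_succ_iff] using hk
        obtain ⟨N, hN⟩ : ∃ N, n - k = N := ⟨_, rfl⟩
        have hn : n = k + N := by omega
        subst hn
        rw [hf, hgdef]
        dsimp only
        rw [hN]
        have keyN : (k+N+1).factorial = ((k+N+1).choose k) * k.factorial * (N+1).factorial := by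
          have h := Nat.choose_mul_factorial_mul_factorial (show k ≤ k+N+1 by omega)
          simpa [show k+N+1-k = N+1 by omega] using h.symm
        have key : ((k+N+1).factorial : ℝ)
            = ((k+N+1).choose k : ℝ) * (k.factorial : ℝ) * ((N+1).factorial : ℝ) := by
          exact_mod_cast keyN
        have hchoose_pos : (0:ℝ) < ((k+N+1).choose k : ℝ) := by
          exact_mod_cast Nat.choose_pos (le_trans (Nat.le_add_right k N) (Nat.le_succ _))
        have hkfac : (k.factorial : ℝ) ≠ 0 := by exact_mod_cast k.factorial_pos.ne'
        have hNfac : ((N+1).factorial : ℝ) ≠ 0 := by exact_mod_cast (N+1).factorial_pos.ne'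
        have hNf2 : ((N:ℝ)+1) ≠ 0 := by positivity
        push_cast
        rw [key]
        have hNfacs : ((N+1).factorial : ℝ) = ((N:ℝ)+1) * (N.factorial : ℝ) := by
          exact_mod_cast (Nat.factorial_succ N)
        rw [hNfacs]
        field_simp
        ring_nf
      rw [Finset.sum_congr rfl hterm2]
      rw [← Finset.sum_div, ← Finset.sum_mul, ← Nat.cast_sum]
      have hconv := stirling_conv j (n+1)
      simp only [Nat.succ_sub_one] at hconv
      rw [hconv]
      push_cast
      ring
    rw [funext hterm] at hprod
    have hj1 : ((j:ℝ)+1) ≠ 0 := by positivity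
    have hd : HasSum (fun n => (stirling (n+2) (j+2) : ℝ) * x^(n+1) / (n+1).factorial)
        ((-Real.log (1-x))^(j+1) / ((j+1).factorial * (1-x))) := by
      have h2 := hprod.mul_left (((j:ℝ)+1)⁻¹)
      have hfun : (fun n : ℕ => (((j:ℝ)+1)⁻¹ * (((j:ℝ) + 1) * ((stirling (n+2) (j+2):ℝ)
            * x^(n+1) / (n+1).factorial))))
          = fun n => (stirling (n+2) (j+2) : ℝ) * x^(n+1) / (n+1).factorial := by
        funext n; rw [← mul_assoc, inv_mul_cancel₀ hj1, one_mul]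
      rw [hfun] at h2
      rw [show (-Real.log (1-x))^(j+1) / (((j+1).factorial:ℝ) * (1-x)) = ((j:ℝ)+1)⁻¹ * (((-Real.log (1-x))^j / ((j.factorial:ℝ) * (1-x))) * (-Real.log (1-x))) from ?_]
      · exact h2
      have hjf : ((j.factorial : ℝ)) ≠ 0 := by exact_mod_cast j.factorial_pos.ne'
      have hjs : (((j+1).factorial : ℝ)) = ((j:ℝ)+1) * (j.factorial : ℝ) := by
        exact_mod_cast Nat.factorial_succ j
      rw [hjs, pow_succ]
      field_simp
    have key := (hasSum_nat_add_iff
      (f := fun n : ℕ => (stirling (n+1) (j+2) : ℝ) * x^n / n.factorial) 1).mp hd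
    simpa [stirling_one_succ] using key

lemma harm_nonneg (n : ℕ) : (0:ℝ) ≤ (harmonic n : ℝ) := by
  rw [harmonic]
  push_cast
  exact Finset.sum_nonneg (fun i _ => by positivity)

lemma pow_succ_add_le (a b : ℝ) (ha : 0 ≤ a) (hb : 0 ≤ b) :
    ∀ j : ℕ, a^(j+1) + ((j:ℝ)+1) * a^j * b ≤ (a+b)^(j+1) := by
  intro j
  induction j with
  | zero => simp
  | succ j ih =>
    have hab : 0 ≤ a + b := add_nonneg ha hb
    have h2 := mul_le_mul_of_nonneg_left ih hab
    have e1 : a^(j+1+1) = a^(j+1) * a := pow_succ a (j+1)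
    have e2 : a^(j+1) = a^j * a := pow_succ a j
    have e3 : (a+b)^(j+1+1) = (a+b)^(j+1) * (a+b) := pow_succ (a+b) (j+1)
    have hb2 : (0:ℝ) ≤ a^j * b * b := by positivity
    have hjb : (0:ℝ) ≤ ((j:ℝ)+1) * (a^j * b * b) := mul_nonneg (by positivity) hb2
    have hexp : (a+b) * (a^(j+1) + ((j:ℝ)+1)*a^j*b)
        = a^(j+1)*a + ((j:ℝ)+2)*a^(j+1)*b + ((j:ℝ)+1)*(a^j*b*b) := by
      rw [e2]; ring
    push_cast
    rw [e1, e3]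
    nlinarith [h2, hjb, hexp]

lemma stirling_le_harm : ∀ (n j : ℕ), (stirling (n+1) (j+1) : ℝ) ≤ n.factorial * (harmonic n : ℝ)^j := by
  intro n
  induction n with
  | zero =>
    intro j
    cases j with
    | zero => norm_num [stirling]
    | succ i =>
      rw [stirling_one_succ]
      push_cast
      exact mul_nonneg (by positivity) (pow_nonneg (harm_nonneg 0) _)
  | succ n ih =>
    intro j
    have hrec : (stirling (n+2) (j+1) : ℝ)
        = (stirling (n+1) j : ℝ) + ((n:ℝ)+1) * (stirling (n+1) (j+1) : ℝ) := by
      have : stirling (n+2) (j+1) = stirling (n+1) j + (n+1) * stirling (n+1) (j+1) := rfl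
      rw [this]; push_cast; ring
    have hharm : (harmonic (n+1) : ℝ) = (harmonic n : ℝ) + 1/((n:ℝ)+1) := by
      have := harmonic_succ n
      push_cast [this]
      norm_num
    have hfacs : ((n+1).factorial : ℝ) = ((n:ℝ)+1) * (n.factorial : ℝ) := by
      exact_mod_cast Nat.factorial_succ n
    have hn1 : (0:ℝ) < (n:ℝ)+1 := by positivity
    have hfac_pos : (0:ℝ) < n.factorial := by exact_mod_cast n.factorial_pos
    have hH := harm_nonneg n
    cases j with
    | zero =>
      rw [hrec]
      have h0 : (stirling (n+1) 0 : ℝ) = 0 := by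
        norm_num [show stirling (n+1) 0 = 0 from rfl]
      rw [h0]
      have h1 : (stirling (n+1) 1 : ℝ) = n.factorial := by exact_mod_cast stirling_succ_one n
      rw [h1, hfacs]
      norm_num
    | succ i =>
      rw [hrec, hharm, hfacs]
      have ih1 := ih i
      have ih2 := ih (i+1)
      have hb : (0:ℝ) ≤ 1/((n:ℝ)+1) := by positivity
      have hkey := pow_succ_add_le (harmonic n : ℝ) (1/((n:ℝ)+1)) hH hb i
      set H : ℝ := (harmonic n : ℝ)
      set FA : ℝ := (n.factorial : ℝ)
      have step1 : (stirling (n+1) (i+1):ℝ) + ((n:ℝ)+1) * (stirling (n+1) (i+1+1):ℝ)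
          ≤ FA * H^i + ((n:ℝ)+1) * (FA * H^(i+1)) :=
        add_le_add ih1 (mul_le_mul_of_nonneg_left ih2 hn1.le)
      have expand : ((n:ℝ)+1) * FA * (H^(i+1) + ((i:ℝ)+1) * H^i * (1/((n:ℝ)+1)))
          = ((n:ℝ)+1) * FA * H^(i+1) + ((i:ℝ)+1) * FA * H^i := by
        field_simp
      have hXnn : (0:ℝ) ≤ FA * H^i := mul_nonneg hfac_pos.le (pow_nonneg hH i)
      have hinn : (0:ℝ) ≤ (i:ℝ) := Nat.cast_nonneg i
      have step2 : FA * H^i + ((n:ℝ)+1) * (FA * H^(i+1))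
          ≤ ((n:ℝ)+1) * FA * (H + 1/((n:ℝ)+1))^(i+1) := by
        have h := mul_le_mul_of_nonneg_left hkey (mul_nonneg hn1.le hfac_pos.le)
        rw [expand] at h
        nlinarith [mul_nonneg hinn hXnn]
      push_cast
      push_cast at step1
      linarith [le_trans step1 step2]

lemma log_poly_summable (j : ℕ) :
    Summable (fun m : ℕ => (1 + Real.log ((m:ℝ)+1))^j / ((m:ℝ)+1)^2) := by
  set ε : ℝ := 1/(2*((j:ℝ)+1)) with hε
  have hεpos : 0 < ε := by positivity
  set D : ℝ := 1 + 2*((j:ℝ)+1) with hD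
  have hgoal : ∀ m : ℕ, (1 + Real.log ((m:ℝ)+1))^j / ((m:ℝ)+1)^2
      ≤ D^j * ((m:ℝ)+1)^(-(3/2) : ℝ) := by
    intro m
    have hm1 : (1:ℝ) ≤ (m:ℝ)+1 := by norm_num
    have hmpos : (0:ℝ) < (m:ℝ)+1 := by positivity
    have hlog : Real.log ((m:ℝ)+1) ≤ ((m:ℝ)+1)^ε / ε :=
      Real.log_le_rpow_div (by positivity) hεpos
    have hrp1 : (1:ℝ) ≤ ((m:ℝ)+1)^ε := Real.one_le_rpow hm1 (le_of_lt hεpos)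
    have h1 : 1 + Real.log ((m:ℝ)+1) ≤ D * ((m:ℝ)+1)^ε := by
      have hdiv : ((m:ℝ)+1)^ε / ε = (2*((j:ℝ)+1)) * ((m:ℝ)+1)^ε := by
        rw [hε]; field_simp
      rw [hD]
      calc 1 + Real.log ((m:ℝ)+1) ≤ ((m:ℝ)+1)^ε + (2*((j:ℝ)+1)) * ((m:ℝ)+1)^ε := by
            rw [← hdiv]; gcongr
        _ = (1 + 2*((j:ℝ)+1)) * ((m:ℝ)+1)^ε := by ring
    have hlognn : 0 ≤ 1 + Real.log ((m:ℝ)+1) := by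
      have := Real.log_nonneg hm1
      linarith
    have hDj : (0:ℝ) ≤ D^j := by positivity
    have h4 : (((m:ℝ)+1)^ε)^j = ((m:ℝ)+1)^(ε * j) := by
      rw [← Real.rpow_natCast (((m:ℝ)+1)^ε) j, ← Real.rpow_mul (le_of_lt hmpos)]
    have h5 : ((m:ℝ)+1)^(ε * j) ≤ ((m:ℝ)+1)^(1/2 : ℝ) := by
      apply Real.rpow_le_rpow_of_exponent_le hm1
      rw [hε, div_mul_eq_mul_div, one_mul, div_le_div_iff₀ (by positivity) (by norm_num)]
      have : (0:ℝ) ≤ (j:ℝ) := Nat.cast_nonneg j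
      nlinarith
    have hfinal : (1 + Real.log ((m:ℝ)+1))^j ≤ D^j * ((m:ℝ)+1)^(1/2 : ℝ) := by
      calc (1 + Real.log ((m:ℝ)+1))^j ≤ (D * ((m:ℝ)+1)^ε)^j := pow_le_pow_left₀ hlognn h1 j
        _ = D^j * (((m:ℝ)+1)^ε)^j := mul_pow _ _ _
        _ = D^j * ((m:ℝ)+1)^(ε * j) := by rw [h4]
        _ ≤ D^j * ((m:ℝ)+1)^(1/2 : ℝ) := mul_le_mul_of_nonneg_left h5 hDj
    have h6 : ((m:ℝ)+1)^(2:ℕ) = ((m:ℝ)+1)^(2:ℝ) := by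
      rw [← Real.rpow_natCast ((m:ℝ)+1) 2]; norm_num
    calc (1 + Real.log ((m:ℝ)+1))^j / ((m:ℝ)+1)^2
        ≤ D^j * ((m:ℝ)+1)^(1/2 : ℝ) / ((m:ℝ)+1)^2 := by gcongr
      _ = D^j * ((m:ℝ)+1)^(-(3/2) : ℝ) := by
          rw [mul_div_assoc, h6, ← Real.rpow_sub hmpos]
          norm_num
  have hsum : Summable (fun m : ℕ => D^j * ((m:ℝ)+1)^(-(3/2) : ℝ)) := by
    apply Summable.mul_left
    have h := (Real.summable_nat_rpow (p := -(3/2))).mpr (by norm_num)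
    have h2 := (summable_nat_add_iff 1).mpr h
    refine h2.congr (fun n => ?_)
    push_cast
    norm_num
  refine hsum.of_nonneg_of_le (fun m => ?_) hgoal
  have hm1 : (1:ℝ) ≤ (m:ℝ)+1 := by norm_num
  have := Real.log_nonneg hm1
  exact div_nonneg (pow_nonneg (by linarith) j) (by positivity)

end

section
open MeasureTheory intervalIntegral

lemma measurable_pml (m k : ℕ) : Measurable (fun t : ℝ => t^m * Real.log t ^ k) :=
  ((measurable_id.pow_const m).mul (Real.measurable_log.pow_const k))

lemma intInteg (m k : ℕ) :
    IntervalIntegrable (fun t : ℝ => t^m * Real.log t ^ k) volume 0 1 := by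
  rw [intervalIntegrable_iff_integrableOn_Ioc_of_le (by norm_num : (0:ℝ) ≤ 1)]
  set ε : ℝ := 1/(2*((k:ℝ)+1)) with hε
  have hεpos : 0 < ε := by positivity
  have hint : IntegrableOn (fun t : ℝ => (1/ε)^k * t^(-(1/2) : ℝ)) (Set.Ioc 0 1) volume := by
    apply Integrable.const_mul
    have := (intervalIntegrable_rpow' (a := 0) (b := 1) (r := -(1/2)) (by norm_num))
    rwa [intervalIntegrable_iff_integrableOn_Ioc_of_le (by norm_num : (0:ℝ) ≤ 1)] at this
  refine hint.mono' ((measurable_pml m k).aestronglyMeasurable) ?_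
  rw [ae_restrict_iff' measurableSet_Ioc]
  refine Filter.Eventually.of_forall (fun t ht => ?_)
  obtain ⟨ht0, ht1⟩ := ht
  have habs : |Real.log t| ≤ (1/ε) * t^(-ε) := by
    rw [abs_of_nonpos (Real.log_nonpos ht0.le ht1)]
    have h2 : Real.log (1/t) ≤ (1/t)^ε / ε := Real.log_le_rpow_div (by positivity) hεpos
    rw [Real.log_div one_ne_zero ht0.ne', Real.log_one, zero_sub] at h2
    rw [Real.div_rpow (by norm_num) ht0.le, Real.one_rpow] at h2
    rw [Real.rpow_neg ht0.le]
    calc -Real.log t ≤ 1/t^ε/ε := h2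
      _ = (1/ε) * (t^ε)⁻¹ := by field_simp
  have hpow : |Real.log t|^k ≤ ((1/ε) * t^(-ε))^k :=
    pow_le_pow_left₀ (abs_nonneg _) habs k
  have htm : t^m ≤ 1 := pow_le_one₀ ht0.le ht1
  have hrw : ((1/ε) * t^(-ε))^k = (1/ε)^k * t^(-(ε*(k:ℝ))) := by
    rw [mul_pow, ← Real.rpow_natCast (t^(-ε)) k, ← Real.rpow_mul ht0.le]
    ring_nf
  have hexp : t^(-(ε*(k:ℝ))) ≤ t^(-(1/2) : ℝ) := by
    apply Real.rpow_le_rpow_of_exponent_ge ht0 ht1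
    rw [neg_le_neg_iff, hε]
    rw [div_mul_eq_mul_div, one_mul, div_le_div_iff₀ (by positivity) (by norm_num)]
    have : (0:ℝ) ≤ (k:ℝ) := Nat.cast_nonneg k
    nlinarith
  rw [Real.norm_eq_abs, abs_mul, abs_pow, abs_pow, abs_of_pos ht0]
  calc t^m * |Real.log t|^k ≤ 1 * ((1/ε) * t^(-ε))^k := by
        apply mul_le_mul htm hpow (by positivity) (by norm_num)
    _ = (1/ε)^k * t^(-(ε*(k:ℝ))) := by rw [one_mul, hrw]
    _ ≤ (1/ε)^k * t^(-(1/2) : ℝ) := by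
        apply mul_le_mul_of_nonneg_left hexp (by positivity)

lemma tendsto_pow_log_zero (m k : ℕ) :
    Filter.Tendsto (fun t : ℝ => t^(m+1) * Real.log t ^ (k+1)) (nhdsWithin 0 (Set.Ioi 0)) (nhds 0) := by
  set r : ℝ := ((m:ℝ)+1)/((k:ℝ)+1) with hr
  have hrpos : 0 < r := by positivity
  have h1 := (tendsto_log_mul_rpow_nhdsGT_zero hrpos).pow (k+1)
  rw [show (0:ℝ)^(k+1) = 0 by simp] at h1
  refine h1.congr' ?_
  filter_upwards [self_mem_nhdsWithin] with t ht
  have ht0 : (0:ℝ) < t := ht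
  rw [mul_pow, ← Real.rpow_natCast (t^r) (k+1), ← Real.rpow_mul ht0.le]
  have : r * ((k:ℕ)+1 : ℕ) = ((m:ℝ)+1) := by
    rw [hr]
    push_cast
    field_simp
  rw [this]
  rw [show ((m:ℝ)+1) = (((m+1 : ℕ)):ℝ) by push_cast; ring, Real.rpow_natCast]
  ring

lemma integral_pow_mul_log (m : ℕ) : ∀ k : ℕ,
    ∫ t in (0:ℝ)..1, t^m * Real.log t ^ k = (-1:ℝ)^k * k.factorial / ((m:ℝ)+1)^(k+1) := by
  intro k
  induction k with
  | zero =>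
    simp only [pow_zero, mul_one, Nat.factorial_zero, Nat.cast_one, pow_one, one_mul]
    rw [integral_pow]
    norm_num
  | succ k ih =>
    have hm1 : ((m:ℝ)+1) ≠ 0 := by positivity
    set c : ℝ := ((k:ℝ)+1)/((m:ℝ)+1) with hc
    set G : ℝ → ℝ := fun t => t^(m+1) * Real.log t ^ (k+1) / ((m:ℝ)+1) with hG
    have hderiv : ∀ t ∈ Set.Ioo (0:ℝ) 1, HasDerivAt G
        (t^m * Real.log t ^ (k+1) + c * (t^m * Real.log t ^ k)) t := by
      intro t ht
      have ht0 : (0:ℝ) < t := ht.1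
      have h1 : HasDerivAt (fun t : ℝ => t^(m+1)) (((m:ℕ)+1 : ℕ) * t^m) t := by
        simpa using hasDerivAt_pow (m+1) t
      have h2 : HasDerivAt (fun t : ℝ => Real.log t ^ (k+1))
          (((k:ℕ)+1 : ℕ) * Real.log t ^ k * t⁻¹) t :=
        (Real.hasDerivAt_log ht0.ne').pow (k+1)
      have h3 := (h1.mul h2).div_const ((m:ℝ)+1)
      refine h3.congr_deriv (Eq.symm ?_)
      have htne : t ≠ 0 := ht0.ne'
      rw [eq_div_iff hm1, hc, pow_succ]
      push_cast
      field_simp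
      ring
    have hint1 := intInteg m (k+1)
    have hint2 := (intInteg m k).const_mul c
    have hint : IntervalIntegrable
        (fun t : ℝ => t^m * Real.log t ^ (k+1) + c * (t^m * Real.log t ^ k)) volume 0 1 :=
      hint1.add hint2
    have h0 : Filter.Tendsto G (nhdsWithin 0 (Set.Ioi 0)) (nhds 0) := by
      have := (tendsto_pow_log_zero m k).div_const ((m:ℝ)+1)
      simpa [hG] using this
    have h1' : Filter.Tendsto G (nhdsWithin 1 (Set.Iio 1)) (nhds 0) := by
      have hcont : ContinuousAt G 1 := by
        apply ContinuousAt.div_const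
        exact (continuousAt_pow _ _).mul
          ((Real.continuousAt_log one_ne_zero).pow (k+1))
      have hG1 : G 1 = 0 := by simp [hG]
      rw [← hG1]
      exact hcont.continuousWithinAt.tendsto
    have hFTC := integral_eq_sub_of_hasDerivAt_of_tendsto (by norm_num : (0:ℝ) < 1)
      hderiv hint h0 h1'
    rw [sub_zero] at hFTC
    have hsplit : ∫ t in (0:ℝ)..1, (t^m * Real.log t ^ (k+1) + c * (t^m * Real.log t ^ k))
        = (∫ t in (0:ℝ)..1, t^m * Real.log t ^ (k+1))
          + c * ∫ t in (0:ℝ)..1, t^m * Real.log t ^ k := by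
      rw [integral_add hint1 hint2, intervalIntegral.integral_const_mul]
    rw [hsplit, ih] at hFTC
    have : (∫ t in (0:ℝ)..1, t^m * Real.log t ^ (k+1))
        = - (c * ((-1:ℝ)^k * k.factorial / ((m:ℝ)+1)^(k+1))) := by linarith
    rw [this, hc]
    rw [show (k+1).factorial = (k+1) * k.factorial from Nat.factorial_succ k]
    push_cast
    field_simp
    ring

end

section
open MeasureTheory

lemma harm_le (n : ℕ) : (harmonic n : ℝ) ≤ 1 + Real.log ((n:ℝ)+1) := by
  cases n with
  | zero =>
    have h0 : (harmonic 0 : ℝ) = 0 := by simp [harmonic]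
    rw [h0]
    norm_num [Real.log_one]
  | succ n =>
    have h1 := harmonic_le_one_add_log (n+1)
    have h2 : Real.log ((n+1:ℕ):ℝ) ≤ Real.log (((n:ℕ):ℝ)+1+1) := by
      rw [Real.log_le_log_iff (by positivity) (by positivity)]
      push_cast
      linarith
    push_cast at h1 h2 ⊢
    linarith


theorem stmt4 (j k : ℕ) (hk : 1 ≤ k) :
    ∫ t in (0:ℝ)..1, (Real.log (1+t))^j * (Real.log t)^k / (1+t) =
      (-1:ℝ)^(k+j) * (Nat.factorial k : ℝ) * (Nat.factorial j : ℝ) *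
      ∑' n : ℕ, (-1:ℝ)^n * (stirling (n+1) (j+1) : ℝ) /
        ((Nat.factorial (n+1) : ℝ) * ((n:ℝ)+1)^k) := by
  set c : ℕ → ℝ := fun m => (-1:ℝ)^(m+j) * (j.factorial:ℝ) * (stirling (m+1) (j+1) : ℝ)
    / m.factorial with hc
  set F : ℕ → ℝ → ℝ := fun m t => c m * (t^m * Real.log t ^ k) with hF
  -- pointwise sum on Ioo 0 1
  have hptwise : ∀ t ∈ Set.Ioo (0:ℝ) 1, HasSum (fun m => F m t)
      ((Real.log (1+t))^j * (Real.log t)^k / (1+t)) := by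
    intro t ht
    have habs : |(-t)| < 1 := by
      rw [abs_neg, abs_of_pos ht.1]; exact ht.2
    have hs := (hasSum_P j habs).mul_left ((-1:ℝ)^j * (j.factorial : ℝ) * Real.log t ^ k)
    have h1t : (1:ℝ) - (-t) = 1 + t := by ring
    rw [h1t] at hs
    have hjf : ((j.factorial : ℝ)) ≠ 0 := by exact_mod_cast j.factorial_pos.ne'
    have h1tpos : (0:ℝ) < 1 + t := by linarith [ht.1]
    have hfun : (fun m => ((-1:ℝ)^j * (j.factorial : ℝ) * Real.log t ^ k)
        * ((stirling (m+1) (j+1) : ℝ) * (-t)^m / m.factorial)) = fun m => F m t := by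
      funext m
      rw [hF, hc]
      have hmf : ((m.factorial : ℝ)) ≠ 0 := by exact_mod_cast m.factorial_pos.ne'
      rw [neg_pow t m]
      field_simp
      ring
    rw [hfun] at hs
    rw [show (Real.log (1+t))^j * (Real.log t)^k / (1+t) = (-1:ℝ)^j * (j.factorial:ℝ) * Real.log t^k * ((-Real.log (1+t))^j / ((j.factorial:ℝ) * (1+t))) from ?_]
    · exact hs
    rw [neg_pow (Real.log (1+t)) j]
    have hsq : ((-1:ℝ))^j * ((-1:ℝ))^j = 1 := by
      rw [← pow_add, ← two_mul, pow_mul]; norm_num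
    rw [show (-1:ℝ)^j * (j.factorial:ℝ) * Real.log t^k
          * ((-1:ℝ)^j * Real.log (1+t)^j / ((j.factorial:ℝ) * (1+t)))
        = ((-1:ℝ)^j*(-1:ℝ)^j)
          * (((j.factorial:ℝ) * (Real.log (1+t)^j * Real.log t^k)) / ((j.factorial:ℝ) * (1+t)))
      from by ring]
    rw [hsq, one_mul, mul_div_mul_left _ _ hjf]
  -- integrability
  have hF_int : ∀ m : ℕ, IntegrableOn (F m) (Set.Ioc 0 1) volume := by
    intro m
    have := ((intervalIntegrable_iff_integrableOn_Ioc_of_le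
      (by norm_num : (0:ℝ) ≤ 1)).mp (intInteg m k)).const_mul (c m)
    exact this
  -- norm integral computation
  have hnorm : ∀ m : ℕ, (∫ t in Set.Ioc (0:ℝ) 1, ‖F m t‖)
      = |c m| * ((k.factorial : ℝ) / ((m:ℝ)+1)^(k+1)) := by
    intro m
    have h1 : Set.EqOn (fun t => ‖F m t‖)
        (fun t => |c m| * ((-1:ℝ)^k * (t^m * Real.log t ^ k))) (Set.Ioc (0:ℝ) 1) := by
      intro t ht
      have hlg : Real.log t ≤ 0 := Real.log_nonpos ht.1.le ht.2
      have ht0 : (0:ℝ) < t := ht.1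
      show ‖F m t‖ = |c m| * ((-1:ℝ)^k * (t^m * Real.log t ^ k))
      rw [hF]
      rw [Real.norm_eq_abs, abs_mul, abs_mul, abs_pow, abs_pow, abs_of_pos ht0,
        abs_of_nonpos hlg]
      rw [neg_pow (Real.log t) k]
      ring
    rw [setIntegral_congr_fun measurableSet_Ioc h1]
    rw [integral_const_mul, integral_const_mul]
    rw [← intervalIntegral.integral_of_le (by norm_num : (0:ℝ) ≤ 1),
      integral_pow_mul_log m k]
    have hsq : (-1:ℝ)^k * ((-1:ℝ)^k * (k.factorial : ℝ) / ((m:ℝ)+1)^(k+1))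
        = (k.factorial : ℝ) / ((m:ℝ)+1)^(k+1) := by
      rw [← mul_div_assoc, ← mul_assoc, ← mul_pow]
      norm_num
    rw [hsq]
  -- summability of norms
  have habsc : ∀ m : ℕ, |c m| = (j.factorial:ℝ) * (stirling (m+1) (j+1) : ℝ) / m.factorial := by
    intro m
    rw [hc]
    rw [abs_div, abs_mul, abs_mul, abs_pow, abs_neg, abs_one, one_pow, one_mul,
      Nat.abs_cast, Nat.abs_cast, Nat.abs_cast]
  have hsummable : Summable (fun m : ℕ => |c m| * ((k.factorial : ℝ) / ((m:ℝ)+1)^(k+1))) := by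
    apply ((log_poly_summable j).mul_left ((j.factorial:ℝ) * k.factorial)).of_nonneg_of_le
    · intro m; positivity
    · intro m
      rw [habsc m]
      have hmf : (0:ℝ) < m.factorial := by exact_mod_cast m.factorial_pos
      have hm1 : (0:ℝ) < (m:ℝ)+1 := by positivity
      have hlognn : (0:ℝ) ≤ 1 + Real.log ((m:ℝ)+1) := by
        have := Real.log_nonneg (by norm_num : (1:ℝ) ≤ (m:ℝ)+1)
        linarith
      have hs1 : (stirling (m+1) (j+1) : ℝ)/m.factorial ≤ (1 + Real.log ((m:ℝ)+1))^j := by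
        rw [div_le_iff₀ hmf]
        calc (stirling (m+1) (j+1) : ℝ) ≤ m.factorial * (harmonic m : ℝ)^j :=
              stirling_le_harm m j
          _ ≤ m.factorial * (1 + Real.log ((m:ℝ)+1))^j := by
              apply mul_le_mul_of_nonneg_left _ hmf.le
              exact pow_le_pow_left₀ (harm_nonneg m) (harm_le m) j
          _ = (1 + Real.log ((m:ℝ)+1))^j * m.factorial := by ring
      have hp : ((m:ℝ)+1)^2 ≤ ((m:ℝ)+1)^(k+1) :=
        pow_le_pow_right₀ (by norm_num) (by omega)
      have hdiv : ((stirling (m+1) (j+1) : ℝ)/m.factorial) / ((m:ℝ)+1)^(k+1)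
          ≤ (1 + Real.log ((m:ℝ)+1))^j / ((m:ℝ)+1)^2 :=
        div_le_div₀ (pow_nonneg hlognn j) hs1 (by positivity) hp
      calc (j.factorial:ℝ) * (stirling (m+1) (j+1) : ℝ) / m.factorial
            * ((k.factorial : ℝ) / ((m:ℝ)+1)^(k+1))
          = ((j.factorial:ℝ) * k.factorial)
            * (((stirling (m+1) (j+1) : ℝ)/m.factorial) / ((m:ℝ)+1)^(k+1)) := by
            ring
        _ ≤ ((j.factorial:ℝ) * k.factorial)
            * ((1 + Real.log ((m:ℝ)+1))^j / ((m:ℝ)+1)^2) := by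
            apply mul_le_mul_of_nonneg_left hdiv (by positivity)
  -- swap sum and integral
  have hswap := MeasureTheory.hasSum_integral_of_summable_integral_norm
    (μ := volume.restrict (Set.Ioc (0:ℝ) 1)) (F := F) hF_int
    (by
      refine hsummable.congr (fun m => ?_)
      exact (hnorm m).symm)
  -- identify the integral of the tsum
  have htsum_int : (∫ t in Set.Ioc (0:ℝ) 1, (∑' m, F m t))
      = ∫ t in Set.Ioc (0:ℝ) 1, (Real.log (1+t))^j * (Real.log t)^k / (1+t) := by
    rw [integral_Ioc_eq_integral_Ioo, integral_Ioc_eq_integral_Ioo]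
    apply setIntegral_congr_fun measurableSet_Ioo
    intro t ht
    exact (hptwise t ht).tsum_eq
  -- value of each integral
  have hint_val : ∀ m : ℕ, (∫ t in Set.Ioc (0:ℝ) 1, F m t)
      = c m * ((-1:ℝ)^k * (k.factorial : ℝ) / ((m:ℝ)+1)^(k+1)) := by
    intro m
    rw [hF]
    rw [integral_const_mul]
    rw [← intervalIntegral.integral_of_le (by norm_num : (0:ℝ) ≤ 1),
      integral_pow_mul_log m k]
  rw [intervalIntegral.integral_of_le (by norm_num : (0:ℝ) ≤ 1)]
  rw [← htsum_int, ← hswap.tsum_eq]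
  rw [← tsum_mul_left]
  apply tsum_congr
  intro n
  rw [hint_val n]
  simp only [hc]
  have hnf : ((n.factorial : ℝ)) ≠ 0 := by exact_mod_cast n.factorial_pos.ne'
  have hnf1 : (((n+1).factorial : ℝ)) = ((n:ℝ)+1) * (n.factorial : ℝ) := by
    exact_mod_cast Nat.factorial_succ n
  have hn1 : ((n:ℝ)+1) ≠ 0 := by positivity
  rw [hnf1, pow_add ((-1:ℝ)) k j, pow_add ((-1:ℝ)) n j, pow_succ ((n:ℝ)+1) k]
  field_simp

end
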